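/- arXiv:2112.01311 — 3 statements merged into one kernel-verified Lean document; each statement's English description precedes it below -/
import Mathlib

section
/- If X is a tree (finite acyclic simple graph, viewed as a 1-dimensional simplicial complex) with at least one critical 1-simplex, and f is a discrete Morse function on X, then the restriction of f to the set of critical simplices attains its maximum on a critical 1-simplex. -/
/-- The data of a function on the simplices (vertices and edges) of a graph. -/
structure PreDMF (V : Type*) where
  f₀ : V → ℝ
  f₁ : Sym2 V → ℝ

/-- A discrete Morse function on a graph: weakly increasing on faces, at most 2-to-1,
and equal values only occur on vertex/incident-edge pairs. -/
def IsDMF {V : Type*} (G : SimpleGraph V) (F : PreDMF V) : Prop :=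
  (∀ e ∈ G.edgeSet, ∀ v ∈ e, F.f₀ v ≤ F.f₁ e) ∧
  (∀ u v : V, F.f₀ u = F.f₀ v → u = v) ∧
  (∀ e ∈ G.edgeSet, ∀ e' ∈ G.edgeSet, F.f₁ e = F.f₁ e' → e = e') ∧
  (∀ v : V, ∀ e ∈ G.edgeSet, F.f₀ v = F.f₁ e → v ∈ e)

/-- A critical 0-simplex (vertex): no edge shares its value. -/
def CritV {V : Type*} (G : SimpleGraph V) (F : PreDMF V) (v : V) : Prop :=
  ∀ e ∈ G.edgeSet, F.f₁ e ≠ F.f₀ v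

/-- A critical 1-simplex (edge): no vertex shares its value. -/
def CritE {V : Type*} (G : SimpleGraph V) (F : PreDMF V) (e : Sym2 V) : Prop :=
  e ∈ G.edgeSet ∧ ∀ v : V, F.f₀ v ≠ F.f₁ e

/-- The sublevel complex of level `c` (edges of value `≤ c`). -/
def lsub {V : Type*} (G : SimpleGraph V) (F : PreDMF V) (c : ℝ) : SimpleGraph V where
  Adj u w := G.Adj u w ∧ F.f₁ s(u, w) ≤ c
  symm := by
    constructor
    intro u w h
    exact ⟨h.1.symm, by rw [Sym2.eq_swap]; exact h.2⟩
  loopless := by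
    constructor
    intro u h
    exact G.irrefl h.1

/-- The strict sublevel complex `X_{c-ε}` (edges of value `< c`). -/
def ssub {V : Type*} (G : SimpleGraph V) (F : PreDMF V) (c : ℝ) : SimpleGraph V where
  Adj u w := G.Adj u w ∧ F.f₁ s(u, w) < c
  symm := by
    constructor
    intro u w h
    exact ⟨h.1.symm, by rw [Sym2.eq_swap]; exact h.2⟩
  loopless := by
    constructor
    intro u h
    exact G.irrefl h.1

lemma key_walk {V : Type*} (G : SimpleGraph V) (F : PreDMF V) (hF : IsDMF G F)
    {v : V} (hv : CritV G F v) (hm : ∀ e', CritE G F e' → F.f₁ e' < F.f₀ v) :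
    ∀ {w : V} (p : G.Walk w v), p.IsPath → w ≠ v →
      F.f₀ v < F.f₀ w ∧ ∃ u ∈ p.support, u ≠ w ∧ s(w, u) ∈ G.edgeSet ∧
        F.f₀ w = F.f₁ s(w, u) := by
  obtain ⟨h1, h2, h3, h4⟩ := hF
  intro w p
  induction p with
  | nil => intro _ hne; exact absurd rfl hne
  | @cons w u₀ v h q ih =>
    intro hp hne
    have hq : q.IsPath := hp.of_cons
    have hws : w ∉ q.support := ((SimpleGraph.Walk.cons_isPath_iff h q).mp hp).2
    have heEdge : s(w, u₀) ∈ G.edgeSet := h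
    have hwne : w ≠ u₀ := G.ne_of_adj h
    have hu₀mem : u₀ ∈ s(w, u₀) := Sym2.mem_mk_right w u₀
    have hle : F.f₀ u₀ ≤ F.f₁ s(w, u₀) := h1 _ heEdge u₀ hu₀mem
    -- the edge s(w,u₀) is matched to some vertex x
    have hx : ∃ x : V, F.f₀ x = F.f₁ s(w, u₀) := by
      by_contra hno
      push_neg at hno
      have hcrit : CritE G F s(w, u₀) := ⟨heEdge, hno⟩
      have hlt := hm _ hcrit
      by_cases hu₀v : u₀ = v
      · have hlev : F.f₀ v ≤ F.f₁ s(w, u₀) := by rw [← hu₀v]; exact hle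
        linarith
      · obtain ⟨hgt, -⟩ := ih hv hm hq hu₀v
        linarith
    obtain ⟨x, hxval⟩ := hx
    have hxe : x ∈ s(w, u₀) := h4 x _ heEdge hxval
    rw [Sym2.mem_iff] at hxe
    by_cases hu₀v : u₀ = v
    · have hnev : F.f₁ s(w, u₀) ≠ F.f₀ v := hv _ heEdge
      have hxw : x = w := by
        rcases hxe with hxe | hxe
        · exact hxe
        · exfalso
          apply hnev
          rw [← hxval, hxe, hu₀v]
      have hlev : F.f₀ v ≤ F.f₁ s(w, u₀) := by rw [← hu₀v]; exact hle
      refine ⟨?_, u₀, ?_, hwne.symm, heEdge, hxw ▸ hxval⟩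
      · rw [hxw] at hxval
        rw [hxval]
        exact lt_of_le_of_ne hlev (Ne.symm hnev)
      · simp [SimpleGraph.Walk.support_cons]
    · obtain ⟨hgt, z, hzsup, hzu, hze, hzval⟩ := ih hv hm hq hu₀v
      have hxw : x = w := by
        rcases hxe with hxe | hxe
        · exact hxe
        · exfalso
          have hEq : s(u₀, z) = s(w, u₀) :=
            h3 _ hze _ heEdge (by rw [← hzval, ← hxval, hxe])
          rw [Sym2.eq_iff] at hEq
          rcases hEq with ⟨h5, h6⟩ | ⟨h5, h6⟩
          · exact hwne h5.symm
          · exact hws (h6 ▸ hzsup)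
      rw [hxw] at hxval
      refine ⟨by rw [hxval]; linarith, u₀, ?_, hwne.symm, heEdge, hxval⟩
      simp [SimpleGraph.Walk.support_cons]

/-- If a tree has at least one critical 1-simplex, then the restriction of a discrete
Morse function to the critical simplices attains its maximum on a critical 1-simplex. -/
theorem stmt1 {V : Type*} [Fintype V] (G : SimpleGraph V) (hG : G.IsTree)
    (F : PreDMF V) (hF : IsDMF G F) (h : ∃ e, CritE G F e) :
    ∃ e, CritE G F e ∧ (∀ v : V, CritV G F v → F.f₀ v ≤ F.f₁ e) ∧
      ∀ e' : Sym2 V, CritE G F e' → F.f₁ e' ≤ F.f₁ e := by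
  classical
  obtain ⟨e₀, he₀⟩ := h
  obtain ⟨e, he, hemax⟩ := Finset.exists_max_image
    (Finset.univ.filter fun e => CritE G F e) F.f₁ ⟨e₀, by simp [he₀]⟩
  have hecrit : CritE G F e := by simpa using (Finset.mem_filter.mp he).2
  have hmax : ∀ e', CritE G F e' → F.f₁ e' ≤ F.f₁ e := by
    intro e' he'
    exact hemax e' (by simp [he'])
  refine ⟨e, hecrit, ?_, hmax⟩
  intro v hv
  by_contra hlt
  push_neg at hlt
  have hm : ∀ e', CritE G F e' → F.f₁ e' < F.f₀ v :=
    fun e' he' => lt_of_le_of_lt (hmax e' he') hlt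
  -- pick an endpoint of e
  have hab : ∃ a b, e = s(a, b) := by
    induction e using Sym2.ind with
    | _ a b => exact ⟨a, b, rfl⟩
  obtain ⟨a, b, rfl⟩ := hab
  have haE : F.f₀ a ≤ F.f₁ s(a, b) := hF.1 _ hecrit.1 a (Sym2.mem_mk_left a b)
  have hav : a ≠ v := by
    intro h'
    subst h'
    linarith
  obtain ⟨p⟩ := hG.isConnected.preconnected a v
  have := key_walk G F hF hv hm (p.toPath : G.Walk a v) p.toPath.2 hav
  linarith [this.1]
end

section
/- If two discrete Morse functions f and g on the same tree X are shuffle-equivalent, then their induced merge trees M(X,f) and M(X,g) are isomorphic as merge trees. -/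
/-- Chirality: left or right. -/
inductive Chir : Type
  | L : Chir
  | R : Chir
  deriving DecidableEq

/-- The opposite chirality. -/
def Chir.other : Chir → Chir
  | .L => .R
  | .R => .L

/-- A merge tree: a full rooted chiral binary tree, encoded by the set of its nodes,
each node being the list of chiralities along the shortest path from the root to it
(the root is the empty list). -/
structure MergeTree : Type where
  nodes : Finset (List Chir)
  root_mem : [] ∈ nodes
  prefix_closed : ∀ (w : List Chir) (x : Chir), w ++ [x] ∈ nodes → w ∈ nodes
  full : ∀ w : List Chir, w ++ [Chir.L] ∈ nodes ↔ w ++ [Chir.R] ∈ nodes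

/-- An inner node: a node with (two) children. -/
def MergeTree.IsInner (T : MergeTree) (n : List Chir) : Prop :=
  n ∈ T.nodes ∧ n ++ [Chir.L] ∈ T.nodes

/-- A leaf node: a node without children. -/
def MergeTree.IsLeaf (T : MergeTree) (n : List Chir) : Prop :=
  n ∈ T.nodes ∧ n ++ [Chir.L] ∉ T.nodes

/-- The chirality of a node (the root has chirality `L` by convention). -/
def chir (n : List Chir) : Chir := n.getLast?.getD Chir.L

/-- The number of inner nodes of a merge tree. -/
def MergeTree.innerCount (T : MergeTree) : ℕ :=
  (T.nodes.filter fun n => n ++ [Chir.L] ∈ T.nodes).card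

/-- Auxiliary comparison of path words; the first argument is the letter at the last
position where the two words agreed (cf. "a_k = b_k"): under a common `L`, the letter
`L` precedes `R`; under a common `R`, `R` precedes `L`; shorter words are larger. -/
def leAux : Chir → List Chir → List Chir → Prop
  | _, _, [] => True
  | _, [], _ :: _ => False
  | last, x :: a, y :: b => if x = y then leAux x a b else x = last

/-- The sublevel-connected Morse order (comparison of path words; every path word
starts with the letter `L` for the root). -/
def scLe (a b : List Chir) : Prop := leAux Chir.L a b

/-- The index Morse order: leaves below inner nodes; among leaves and among inner
nodes, compare path words. -/
def ioLe (T : MergeTree) (a b : List Chir) : Prop :=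
  (T.IsLeaf a ∧ T.IsInner b) ∨
    (((T.IsLeaf a ∧ T.IsLeaf b) ∨ (T.IsInner a ∧ T.IsInner b)) ∧ scLe a b)

/-- The simplex order on the nodes of a merge tree. -/
def simpLe (a b : List Chir) : Prop :=
  a = b ∨ (b ++ [Chir.L]) <+: a ∨ (a ++ [Chir.R]) <+: b ∨
    ∃ p : List Chir, (p ++ [Chir.L]) <+: a ∧ (p ++ [Chir.R]) <+: b

/-- A vertex `z` belongs to the connected component of `u` in the strict sublevel
complex `X_{c-ε}`. -/
def inCompV {V : Type*} (G : SimpleGraph V) (F : PreDMF V) (c : ℝ) (u z : V) : Prop :=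
  F.f₀ z < c ∧ (ssub G F c).Reachable z u

/-- An edge `e` belongs to the connected component of `u` in the strict sublevel
complex `X_{c-ε}`. -/
def inCompE {V : Type*} (G : SimpleGraph V) (F : PreDMF V) (c : ℝ) (u : V)
    (e : Sym2 V) : Prop :=
  e ∈ G.edgeSet ∧ F.f₁ e < c ∧ ∀ z ∈ e, (ssub G F c).Reachable z u

/-- `m` is the maximal critical value attained on the connected component of `u` in
the strict sublevel complex `X_{c-ε}`. -/
def IsMaxCrit {V : Type*} (G : SimpleGraph V) (F : PreDMF V) (c : ℝ) (u : V)
    (m : ℝ) : Prop :=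
  ((∃ z : V, inCompV G F c u z ∧ CritV G F z ∧ F.f₀ z = m) ∨
    (∃ e : Sym2 V, inCompE G F c u e ∧ CritE G F e ∧ F.f₁ e = m)) ∧
  (∀ z : V, inCompV G F c u z → CritV G F z → F.f₀ z ≤ m) ∧
  (∀ e : Sym2 V, inCompE G F c u e → CritE G F e → F.f₁ e ≤ m)

/-- `m` is the minimal value attained on the connected component of `u` in the strict
sublevel complex `X_{c-ε}`. -/
def IsCompMin {V : Type*} (G : SimpleGraph V) (F : PreDMF V) (c : ℝ) (u : V)
    (m : ℝ) : Prop :=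
  (∃ z : V, inCompV G F c u z ∧ F.f₀ z = m) ∧
  (∀ z : V, inCompV G F c u z → m ≤ F.f₀ z)

/-- `(T, μ)` is the Morse labeled merge tree `M(X, f)` induced by the dMf `F` on the
tree `G`: nodes correspond bijectively (via the labels `μ`) to critical simplices,
inner nodes to critical edges and leaves to critical vertices; the root corresponds to
the maximal critical edge; and the two children of an inner node carry the maximal
critical values of the two connected components of the strict sublevel complex
containing the endpoints of the corresponding critical edge, the component containing
the smaller minimum inheriting the chirality of the parent. -/
def IsInducedMlTree {V : Type*} (G : SimpleGraph V) (F : PreDMF V)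
    (T : MergeTree) (μ : List Chir → ℝ) : Prop :=
  (∀ n ∈ T.nodes, ∀ n' ∈ T.nodes, μ n = μ n' → n = n') ∧
  (∀ e : Sym2 V, CritE G F e → ∃ n : List Chir, T.IsInner n ∧ μ n = F.f₁ e) ∧
  (∀ v : V, CritV G F v → ∃ n : List Chir, T.IsLeaf n ∧ μ n = F.f₀ v) ∧
  ((∃ e : Sym2 V, CritE G F e) →
    T.IsInner [] ∧ ∀ e : Sym2 V, CritE G F e → F.f₁ e ≤ μ []) ∧
  ((¬ ∃ e : Sym2 V, CritE G F e) → T.nodes = {([] : List Chir)}) ∧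
  (∀ n : List Chir, T.IsLeaf n → ∃ v : V, CritV G F v ∧ F.f₀ v = μ n) ∧
  (∀ n : List Chir, T.IsInner n → ∃ e : Sym2 V, CritE G F e ∧ F.f₁ e = μ n ∧
    ∃ u w : V, s(u, w) = e ∧
      ∃ mu mw minu minw : ℝ,
        IsMaxCrit G F (F.f₁ e) u mu ∧ IsMaxCrit G F (F.f₁ e) w mw ∧
        IsCompMin G F (F.f₁ e) u minu ∧ IsCompMin G F (F.f₁ e) w minw ∧
        ((minu < minw ∧ μ (n ++ [chir n]) = mu ∧ μ (n ++ [(chir n).other]) = mw) ∨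
         (minw < minu ∧ μ (n ++ [chir n]) = mw ∧ μ (n ++ [(chir n).other]) = mu)))

/-- Shuffle equivalence of dMfs on the same tree: same critical simplices, same order
on critical 0-simplices and same order on critical 1-simplices. -/
def ShuffleEquiv {V : Type*} (G : SimpleGraph V) (F F' : PreDMF V) : Prop :=
  (∀ v : V, CritV G F v ↔ CritV G F' v) ∧
  (∀ e : Sym2 V, CritE G F e ↔ CritE G F' e) ∧
  (∀ u v : V, CritV G F u → CritV G F v → (F.f₀ u ≤ F.f₀ v ↔ F'.f₀ u ≤ F'.f₀ v)) ∧
  (∀ e e' : Sym2 V, CritE G F e → CritE G F e' →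
    (F.f₁ e ≤ F.f₁ e' ↔ F'.f₁ e ≤ F'.f₁ e'))

section AuxDev

open SimpleGraph

variable {V : Type*} [DecidableEq V] {G : SimpleGraph V} {F F' : PreDMF V}

lemma ssub_edge_spec {c : ℝ} (e : Sym2 V) (h : e ∈ (ssub G F c).edgeSet) :
    e ∈ G.edgeSet ∧ F.f₁ e < c := by
  induction e using Sym2.ind with
  | _ a b =>
    rw [SimpleGraph.mem_edgeSet] at h
    exact ⟨(SimpleGraph.mem_edgeSet G).2 h.1, h.2⟩

lemma mem_ssub_edgeSet {c : ℝ} (e : Sym2 V) (hG : e ∈ G.edgeSet) (h : F.f₁ e < c) :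
    e ∈ (ssub G F c).edgeSet := by
  induction e using Sym2.ind with
  | _ a b => exact ⟨(SimpleGraph.mem_edgeSet G).1 hG, h⟩

lemma exists_max_list {α : Type*} (f : α → ℝ) :
    ∀ (l : List α), l ≠ [] → ∃ m ∈ l, ∀ x ∈ l, f x ≤ f m := by
  intro l
  induction l with
  | nil => intro h; exact absurd rfl h
  | cons a t ih =>
    intro _
    rcases eq_or_ne t [] with rfl | ht
    · exact ⟨a, List.mem_cons_self, by simp⟩
    · obtain ⟨m, hm, hmax⟩ := ih ht
      by_cases hle : f a ≤ f m
      · refine ⟨m, List.mem_cons_of_mem a hm, ?_⟩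
        intro x hx
        rcases List.mem_cons.mp hx with rfl | hx
        · exact hle
        · exact hmax x hx
      · refine ⟨a, List.mem_cons_self, ?_⟩
        intro x hx
        rcases List.mem_cons.mp hx with rfl | hx
        · exact le_refl _
        · exact le_trans (hmax x hx) (le_of_not_ge hle)

lemma second_edge {H : SimpleGraph V} {a b : V} (p : H.Walk a b) (hp : p.IsPath) :
    ∀ ε ∈ p.edges, ∀ v ∈ ε, v ≠ a → v ≠ b →
    ∃ ε' ∈ p.edges, ε' ≠ ε ∧ v ∈ ε' := by
  induction p with
  | nil => intro ε hε; simp at hε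
  | @cons a x b hadj q ih =>
    intro ε hε v hv hva hvb
    rw [SimpleGraph.Walk.cons_isPath_iff] at hp
    rw [SimpleGraph.Walk.edges_cons, List.mem_cons] at hε
    rcases hε with rfl | hε
    · have hvx : v = x := by
        rcases Sym2.mem_iff.mp hv with h | h
        · exact absurd h hva
        · exact h
      subst hvx
      cases q with
      | nil => exact absurd rfl hvb
      | @cons _ y _ hadj2 q2 =>
        refine ⟨s(v, y), ?_, ?_, Sym2.mem_mk_left _ _⟩
        · simp
        intro hcon
        rcases Sym2.eq_iff.mp hcon with ⟨h1, h2⟩ | ⟨h1, h2⟩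
        · exact hadj.ne' h1
        · refine hp.2 ?_
          rw [← h2, SimpleGraph.Walk.support_cons]
          exact List.mem_cons_of_mem _ q2.start_mem_support
    · by_cases hvx : v = x
      · subst hvx
        refine ⟨s(a, v), ?_, ?_, Sym2.mem_mk_right _ _⟩
        · simp
        intro hcon
        refine hp.2 ?_
        exact SimpleGraph.Walk.fst_mem_support_of_mem_edges q (hcon ▸ hε)
      · obtain ⟨ε', hε', hne, hvm⟩ := ih hp.1 ε hε v hv hvx hvb
        exact ⟨ε', by rw [SimpleGraph.Walk.edges_cons]; exact List.mem_cons_of_mem _ hε', hne, hvm⟩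

lemma mem_support_of_mem_edges' {H : SimpleGraph V} {a b : V} (p : H.Walk a b) {ε : Sym2 V}
    (hε : ε ∈ p.edges) {v : V} (hv : v ∈ ε) : v ∈ p.support := by
  obtain ⟨y, rfl⟩ := Sym2.mem_iff_exists.mp hv
  exact p.fst_mem_support_of_mem_edges hε

lemma reach_of_mem_support {H : SimpleGraph V} {a b v : V} (p : H.Walk a b)
    (hv : v ∈ p.support) : H.Reachable a v := by
  classical
  exact ⟨p.takeUntil v hv⟩

lemma exists_first_edge {H : SimpleGraph V} {a b : V} (p : H.Walk a b) (hab : a ≠ b) :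
    ∃ y, s(a, y) ∈ p.edges := by
  cases p with
  | nil => exact absurd rfl hab
  | @cons _ y _ h q => exact ⟨y, by simp⟩

lemma all_edges_lt (hF : IsDMF G F) {c : ℝ} {z u : V} (p : G.Walk z u) (hp : p.IsPath)
    (hz : CritV G F z ∨ F.f₀ z < c) (hu : CritV G F u ∨ F.f₀ u < c)
    (hcrit : ∀ ε ∈ p.edges, CritE G F ε → F.f₁ ε < c) :
    ∀ ε ∈ p.edges, F.f₁ ε < c := by
  by_contra hcon
  push_neg at hcon
  obtain ⟨ε₀, hε₀, hε₀c⟩ := hcon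
  have hne : p.edges ≠ [] := fun h => by rw [h] at hε₀; simp at hε₀
  obtain ⟨εM, hεM, hmax⟩ := exists_max_list F.f₁ p.edges hne
  have hMg : εM ∈ G.edgeSet := p.edges_subset_edgeSet hεM
  have hcM : c ≤ F.f₁ εM := le_trans hε₀c (hmax _ hε₀)
  have hMnc : ¬ CritE G F εM := fun h => absurd (hcrit _ hεM h) (not_lt.2 hcM)
  rw [CritE, not_and_or] at hMnc
  have hex : ∃ v, F.f₀ v = F.f₁ εM := by
    rcases hMnc with h | h
    · exact absurd hMg h
    · push_neg at h; exact h
  obtain ⟨p₀, hp₀⟩ := hex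
  have hp₀mem : p₀ ∈ εM := hF.2.2.2 p₀ εM hMg hp₀
  have hp₀z : p₀ ≠ z := by
    rintro rfl
    rcases hz with hcv | hlt
    · exact hcv εM hMg hp₀.symm
    · linarith
  have hp₀u : p₀ ≠ u := by
    rintro rfl
    rcases hu with hcv | hlt
    · exact hcv εM hMg hp₀.symm
    · linarith
  obtain ⟨ε', hε', hne', hvε'⟩ := second_edge p hp εM hεM p₀ hp₀mem hp₀z hp₀u
  have h1 : F.f₀ p₀ ≤ F.f₁ ε' := hF.1 ε' (p.edges_subset_edgeSet hε') p₀ hvε'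
  have h2 : F.f₀ p₀ ≠ F.f₁ ε' := fun h =>
    hne' (hF.2.2.1 ε' (p.edges_subset_edgeSet hε') εM hMg (h.symm.trans hp₀))
  have h3 : F.f₀ p₀ < F.f₁ ε' := h1.lt_of_ne h2
  have h4 := hmax ε' hε'
  linarith

lemma reachable_pathcond (hG : G.IsTree) {c : ℝ} {z u : V}
    (h : (ssub G F c).Reachable z u) :
    ∀ (p : G.Walk z u), p.IsPath → ∀ ε ∈ p.edges, F.f₁ ε < c := by
  obtain ⟨w⟩ := h
  have hq := w.toPath.2
  set q : (ssub G F c).Walk z u := w.toPath.1 with hqdef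
  have hsub : ∀ ε ∈ q.edges, ε ∈ G.edgeSet := fun ε hε =>
    (ssub_edge_spec ε (q.edges_subset_edgeSet hε)).1
  have hq'p : (q.transfer G hsub).IsPath := hq.transfer hsub
  intro p hp ε hε
  have huniq : (⟨p, hp⟩ : G.Path z u) = ⟨q.transfer G hsub, hq'p⟩ :=
    hG.2.path_unique _ _
  have hpe : p.edges = q.edges := by
    have := congrArg (fun r : G.Path z u => (r : G.Walk z u).edges) huniq
    simpa [SimpleGraph.Walk.edges_transfer] using this
  rw [hpe] at hε
  exact (ssub_edge_spec ε (q.edges_subset_edgeSet hε)).2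

lemma pathcond_reachable (hG : G.IsTree) {c : ℝ} {z u : V} (p : G.Walk z u)
    (hlt : ∀ ε ∈ p.edges, F.f₁ ε < c) : (ssub G F c).Reachable z u :=
  ⟨p.transfer (ssub G F c)
    (fun ε hε => mem_ssub_edgeSet ε (p.edges_subset_edgeSet hε) (hlt ε hε))⟩

lemma inCompV_iff (hG : G.IsTree) (hF : IsDMF G F) {c : ℝ} {u z : V}
    (hz : CritV G F z ∨ F.f₀ z < c) (hu : F.f₀ u < c) :
    inCompV G F c u z ↔
      ∀ (p : G.Walk z u), p.IsPath → ∀ ε ∈ p.edges, CritE G F ε → F.f₁ ε < c := by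
  constructor
  · rintro ⟨_, hreach⟩ p hp ε hε _
    exact reachable_pathcond hG hreach p hp ε hε
  · intro h
    obtain ⟨w⟩ := hG.1.preconnected z u
    have hall : ∀ ε ∈ (w.toPath.1 : G.Walk z u).edges, F.f₁ ε < c :=
      all_edges_lt hF w.toPath.1 w.toPath.2 hz (Or.inr hu)
        (fun ε hε hc => h w.toPath.1 w.toPath.2 ε hε hc)
    refine ⟨?_, pathcond_reachable hG w.toPath.1 hall⟩
    by_cases hzu : z = u
    · subst hzu; exact hu
    · obtain ⟨y, hy⟩ := exists_first_edge w.toPath.1 hzu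
      exact lt_of_le_of_lt
        (hF.1 _ (SimpleGraph.Walk.edges_subset_edgeSet _ hy) z (Sym2.mem_mk_left _ _))
        (hall _ hy)

lemma f0_lt_f1 (hF : IsDMF G F) {u : V} {e : Sym2 V} (he : CritE G F e) (hu : u ∈ e) :
    F.f₀ u < F.f₁ e :=
  (hF.1 e he.1 u hu).lt_of_ne (he.2 u)

lemma inCompE_iff (hG : G.IsTree) (hF : IsDMF G F) {c : ℝ} {u : V} (hu : F.f₀ u < c)
    {e' : Sym2 V} (he' : CritE G F e') :
    inCompE G F c u e' ↔ F.f₁ e' < c ∧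
      ∀ z ∈ e', ∀ (p : G.Walk z u), p.IsPath → ∀ ε ∈ p.edges, CritE G F ε → F.f₁ ε < c := by
  constructor
  · rintro ⟨hmem, hlt, hreach⟩
    exact ⟨hlt, fun z hz p hp ε hε _ => reachable_pathcond hG (hreach z hz) p hp ε hε⟩
  · rintro ⟨hlt, h⟩
    refine ⟨he'.1, hlt, fun z hz => ?_⟩
    have hzlt : F.f₀ z < c := lt_trans (f0_lt_f1 hF he' hz) hlt
    obtain ⟨w⟩ := hG.1.preconnected z u
    exact pathcond_reachable hG w.toPath.1
      (all_edges_lt hF w.toPath.1 w.toPath.2 (Or.inr hzlt) (Or.inr hu)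
        (fun ε hε hc => h z hz w.toPath.1 w.toPath.2 ε hε hc))

lemma critE_lt_iff (hsh : ShuffleEquiv G F F') {ε e : Sym2 V}
    (hε : CritE G F ε) (he : CritE G F e) :
    F.f₁ ε < F.f₁ e ↔ F'.f₁ ε < F'.f₁ e := by
  rw [← not_le, ← not_le]
  exact not_congr (hsh.2.2.2 e ε he hε)

lemma critV_lt_iff (hsh : ShuffleEquiv G F F') {z v : V}
    (hz : CritV G F z) (hv : CritV G F v) :
    F.f₀ z < F.f₀ v ↔ F'.f₀ z < F'.f₀ v := by
  rw [← not_le, ← not_le]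
  exact not_congr (hsh.2.2.1 v z hv hz)

lemma inCompV_inv (hG : G.IsTree) (hF : IsDMF G F) (hF' : IsDMF G F')
    (hsh : ShuffleEquiv G F F') {e : Sym2 V} {u z : V}
    (he : CritE G F e) (hu : u ∈ e) (hz : CritV G F z) :
    inCompV G F (F.f₁ e) u z ↔ inCompV G F' (F'.f₁ e) u z := by
  have he' : CritE G F' e := (hsh.2.1 e).1 he
  rw [inCompV_iff hG hF (Or.inl hz) (f0_lt_f1 hF he hu),
      inCompV_iff hG hF' (Or.inl ((hsh.1 z).1 hz)) (f0_lt_f1 hF' he' hu)]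
  constructor
  · intro h p hp ε hε hcε
    have hcF : CritE G F ε := (hsh.2.1 ε).2 hcε
    exact (critE_lt_iff hsh hcF he).1 (h p hp ε hε hcF)
  · intro h p hp ε hε hcε
    exact (critE_lt_iff hsh hcε he).2 (h p hp ε hε ((hsh.2.1 ε).1 hcε))

lemma inCompE_inv (hG : G.IsTree) (hF : IsDMF G F) (hF' : IsDMF G F')
    (hsh : ShuffleEquiv G F F') {e : Sym2 V} {u : V}
    (he : CritE G F e) (hu : u ∈ e) {ε : Sym2 V} (hε : CritE G F ε) :
    inCompE G F (F.f₁ e) u ε ↔ inCompE G F' (F'.f₁ e) u ε := by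
  have he' : CritE G F' e := (hsh.2.1 e).1 he
  have hε' : CritE G F' ε := (hsh.2.1 ε).1 hε
  rw [inCompE_iff hG hF (f0_lt_f1 hF he hu) hε,
      inCompE_iff hG hF' (f0_lt_f1 hF' he' hu) hε']
  constructor
  · rintro ⟨h1, h2⟩
    refine ⟨(critE_lt_iff hsh hε he).1 h1, fun z hz p hp ε₂ hε₂ hcε₂ => ?_⟩
    have hcF : CritE G F ε₂ := (hsh.2.1 ε₂).2 hcε₂
    exact (critE_lt_iff hsh hcF he).1 (h2 z hz p hp ε₂ hε₂ hcF)
  · rintro ⟨h1, h2⟩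
    refine ⟨(critE_lt_iff hsh hε he).2 h1, fun z hz p hp ε₂ hε₂ hcε₂ => ?_⟩
    exact (critE_lt_iff hsh hcε₂ he).2 (h2 z hz p hp ε₂ hε₂ ((hsh.2.1 ε₂).1 hcε₂))

lemma not_reach (hG : G.IsTree) {e : Sym2 V} (he : CritE G F e) {u w : V}
    (hew : s(u, w) = e) : ¬ (ssub G F (F.f₁ e)).Reachable u w := by
  intro h
  have hadj : G.Adj u w := by
    rw [← SimpleGraph.mem_edgeSet G, hew]; exact he.1
  have hpath : (SimpleGraph.Walk.cons hadj SimpleGraph.Walk.nil).IsPath := by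
    simp [SimpleGraph.Walk.cons_isPath_iff, hadj.ne]
  have := reachable_pathcond hG h _ hpath s(u, w) (by simp)
  rw [hew] at this
  exact lt_irrefl _ this

/-- Two labels (one for each dMF) correspond to a common critical simplex. -/
def MatchVal {V : Type*} (G : SimpleGraph V) (F F' : PreDMF V) (r r' : ℝ) : Prop :=
  (∃ ε, CritE G F ε ∧ F.f₁ ε = r ∧ F'.f₁ ε = r') ∨
  (∃ z, CritV G F z ∧ F.f₀ z = r ∧ F'.f₀ z = r')

lemma compMin_crit (hF : IsDMF G F) {c m : ℝ} {u : V} (h : IsCompMin G F c u m) :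
    ∃ z, CritV G F z ∧ inCompV G F c u z ∧ F.f₀ z = m := by
  obtain ⟨⟨z₀, hz₀c, hz₀m⟩, hlb⟩ := h
  by_cases hcrit : CritV G F z₀
  · exact ⟨z₀, hcrit, hz₀c, hz₀m⟩
  · exfalso
    rw [CritV] at hcrit; push_neg at hcrit
    obtain ⟨ε, hεg, hεv⟩ := hcrit
    have hz₀ε : z₀ ∈ ε := hF.2.2.2 z₀ ε hεg hεv.symm
    obtain ⟨y, rfl⟩ := Sym2.mem_iff_exists.mp hz₀ε
    have hadjG : G.Adj z₀ y := (SimpleGraph.mem_edgeSet G).1 hεg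
    have h1 : F.f₀ y ≤ F.f₀ z₀ := by
      have := hF.1 _ hεg y (Sym2.mem_mk_right _ _)
      linarith [hεv]
    have hstrict : F.f₀ y < F.f₀ z₀ :=
      h1.lt_of_ne (fun h => hadjG.ne' (hF.2.1 y z₀ h))
    have hyc : inCompV G F c u y := by
      refine ⟨lt_trans hstrict hz₀c.1, ?_⟩
      have hadj : (ssub G F c).Adj y z₀ := by
        refine ⟨hadjG.symm, ?_⟩
        rw [Sym2.eq_swap, hεv]
        exact hz₀c.1
      exact hadj.reachable.trans hz₀c.2
    linarith [hlb y hyc, hstrict, hz₀m]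

lemma compMin_match (hG : G.IsTree) (hF : IsDMF G F) (hF' : IsDMF G F')
    (hsh : ShuffleEquiv G F F') {e : Sym2 V} {u : V} (he : CritE G F e) (hu : u ∈ e)
    {m m' : ℝ} (h : IsCompMin G F (F.f₁ e) u m) (h' : IsCompMin G F' (F'.f₁ e) u m') :
    ∃ z, CritV G F z ∧ inCompV G F (F.f₁ e) u z ∧ F.f₀ z = m ∧ F'.f₀ z = m' := by
  obtain ⟨z, hz, hzc, hzm⟩ := compMin_crit hF h
  obtain ⟨z', hz', hzc', hzm'⟩ := compMin_crit hF' h'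
  have hzF : CritV G F z' := (hsh.1 z').2 hz'
  have h1 : F.f₀ z ≤ F.f₀ z' := by
    rw [hzm]
    exact h.2 z' ((inCompV_inv hG hF hF' hsh he hu hzF).2 hzc')
  have h2 : F'.f₀ z' ≤ F'.f₀ z := by
    rw [hzm']
    exact h'.2 z ((inCompV_inv hG hF hF' hsh he hu hz).1 hzc)
  have h3 : F.f₀ z' ≤ F.f₀ z := (hsh.2.2.1 z' z hzF hz).2 h2
  have hzz : z = z' := hF.2.1 z z' (le_antisymm h1 h3)
  exact ⟨z, hz, hzc, hzm, by rw [hzz]; exact hzm'⟩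

lemma exists_critE_gt (hG : G.IsTree) (hF : IsDMF G F) {c : ℝ} {u z : V} {ε₀ : Sym2 V}
    (hz : CritV G F z) (hzc : inCompV G F c u z)
    (hε₀ : CritE G F ε₀) (hε₀c : inCompE G F c u ε₀) :
    ∃ ε, CritE G F ε ∧ inCompE G F c u ε ∧ F.f₀ z < F.f₁ ε := by
  revert hε₀ hε₀c
  induction ε₀ using Sym2.ind with
  | _ a b =>
    intro hε₀ hε₀c
    have hra : (ssub G F c).Reachable z a :=
      hzc.2.trans (hε₀c.2.2 a (Sym2.mem_mk_left _ _)).symm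
    by_cases hza : z = a
    · refine ⟨s(a, b), hε₀, hε₀c, ?_⟩
      rw [hza]
      exact f0_lt_f1 hF hε₀ (Sym2.mem_mk_left _ _)
    · obtain ⟨w0⟩ := hra
      have hqp : (w0.toPath.1 : (ssub G F c).Walk z a).IsPath := w0.toPath.2
      set q : (ssub G F c).Walk z a := w0.toPath.1 with hqdef
      obtain ⟨y, hy⟩ := exists_first_edge q hza
      obtain ⟨εM, hεM, hmax⟩ := exists_max_list F.f₁ (s(a, b) :: q.edges) (by simp)
      have hqG : ∀ ε ∈ q.edges, ε ∈ G.edgeSet ∧ F.f₁ ε < c := fun ε hε =>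
        ssub_edge_spec ε (q.edges_subset_edgeSet hε)
      have hMG : εM ∈ G.edgeSet := by
        rcases List.mem_cons.mp hεM with rfl | h
        · exact hε₀.1
        · exact (hqG _ h).1
      have hfy : F.f₀ z < F.f₁ s(z, y) := by
        have h1 : F.f₀ z ≤ F.f₁ s(z, y) := hF.1 _ (hqG _ hy).1 z (Sym2.mem_mk_left _ _)
        exact h1.lt_of_ne (fun h => hz _ (hqG _ hy).1 h.symm)
      have hzM : F.f₀ z < F.f₁ εM :=
        lt_of_lt_of_le hfy (hmax _ (List.mem_cons_of_mem _ hy))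
      have hMc : CritE G F εM := by
        by_contra hnc
        have hMq : εM ∈ q.edges := by
          rcases List.mem_cons.mp hεM with rfl | h
          · exact absurd hε₀ hnc
          · exact h
        rw [CritE, not_and_or] at hnc
        have hex2 : ∃ v, F.f₀ v = F.f₁ εM := by
          rcases hnc with h | h
          · exact absurd hMG h
          · push_neg at h; exact h
        obtain ⟨p₀, hp₀⟩ := hex2
        have hp₀m : p₀ ∈ εM := hF.2.2.2 p₀ εM hMG hp₀
        have hp₀z : p₀ ≠ z := by
          rintro rfl
          linarith
        have hp₀a : p₀ ≠ a := by
          intro hpa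
          have hlt : F.f₀ a < F.f₁ s(a, b) := f0_lt_f1 hF hε₀ (Sym2.mem_mk_left _ _)
          have h2 := hmax _ List.mem_cons_self
          rw [hpa] at hp₀
          linarith
        obtain ⟨ε', hε', hne', hvε'⟩ := second_edge q hqp εM hMq p₀ hp₀m hp₀z hp₀a
        have h1 : F.f₀ p₀ ≤ F.f₁ ε' := hF.1 ε' (hqG _ hε').1 p₀ hvε'
        have h2 : F.f₀ p₀ ≠ F.f₁ ε' := fun h =>
          hne' (hF.2.2.1 ε' (hqG _ hε').1 εM hMG (h.symm.trans hp₀))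
        have h3 := hmax ε' (List.mem_cons_of_mem _ hε')
        have h4 := h1.lt_of_ne h2
        linarith
      refine ⟨εM, hMc, ?_, hzM⟩
      rcases List.mem_cons.mp hεM with heq | hMq
      · rw [heq]; exact hε₀c
      · refine ⟨hMG, (hqG _ hMq).2, fun x hx => ?_⟩
        have hxs : x ∈ q.support := mem_support_of_mem_edges' q hMq hx
        exact (reach_of_mem_support q hxs).symm.trans hzc.2

lemma maxCrit_match (hG : G.IsTree) (hF : IsDMF G F) (hF' : IsDMF G F')
    (hsh : ShuffleEquiv G F F') {e : Sym2 V} {u : V} (he : CritE G F e) (hu : u ∈ e)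
    {m m' : ℝ} (h : IsMaxCrit G F (F.f₁ e) u m) (h' : IsMaxCrit G F' (F'.f₁ e) u m') :
    MatchVal G F F' m m' := by
  have he' : CritE G F' e := (hsh.2.1 e).1 he
  by_cases hex : ∃ ε, CritE G F ε ∧ inCompE G F (F.f₁ e) u ε
  · obtain ⟨ε₀, hε₀, hε₀c⟩ := hex
    have hattE : ∃ ε₁, inCompE G F (F.f₁ e) u ε₁ ∧ CritE G F ε₁ ∧ F.f₁ ε₁ = m := by
      rcases h.1 with ⟨z, hzc, hzcrit, hzm⟩ | hE
      · exfalso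
        obtain ⟨ε, hεc, hεcomp, hεgt⟩ := exists_critE_gt hG hF hzcrit hzc hε₀ hε₀c
        linarith [h.2.2 ε hεcomp hεc, hεgt, hzm]
      · exact hE
    obtain ⟨ε₁, hε₁comp, hε₁crit, hε₁m⟩ := hattE
    have hattE' : ∃ ε₂, inCompE G F' (F'.f₁ e) u ε₂ ∧ CritE G F' ε₂ ∧ F'.f₁ ε₂ = m' := by
      rcases h'.1 with ⟨z, hzc, hzcrit, hzm⟩ | hE
      · exfalso
        obtain ⟨ε, hεc, hεcomp, hεgt⟩ := exists_critE_gt hG hF' hzcrit hzc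
          ((hsh.2.1 ε₀).1 hε₀) ((inCompE_inv hG hF hF' hsh he hu hε₀).1 hε₀c)
        linarith [h'.2.2 ε hεcomp hεc, hεgt, hzm]
      · exact hE
    obtain ⟨ε₂, hε₂comp, hε₂crit, hε₂m⟩ := hattE'
    have hcF : CritE G F ε₂ := (hsh.2.1 ε₂).2 hε₂crit
    have h1 : F'.f₁ ε₁ ≤ F'.f₁ ε₂ := by
      rw [hε₂m]
      exact h'.2.2 ε₁ ((inCompE_inv hG hF hF' hsh he hu hε₁crit).1 hε₁comp)
        ((hsh.2.1 ε₁).1 hε₁crit)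
    have h2 : F.f₁ ε₂ ≤ F.f₁ ε₁ := by
      rw [hε₁m]
      exact h.2.2 ε₂ ((inCompE_inv hG hF hF' hsh he hu hcF).2 hε₂comp) hcF
    have h3 : F'.f₁ ε₂ ≤ F'.f₁ ε₁ := (hsh.2.2.2 ε₂ ε₁ hcF hε₁crit).1 h2
    have hεε : ε₁ = ε₂ := hF'.2.2.1 ε₁ hε₁crit.1 ε₂ hcF.1 (le_antisymm h1 h3)
    exact Or.inl ⟨ε₁, hε₁crit, hε₁m, by rw [hεε]; exact hε₂m⟩
  · have hattV : ∃ z, inCompV G F (F.f₁ e) u z ∧ CritV G F z ∧ F.f₀ z = m := by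
      rcases h.1 with hV | ⟨ε, hεcomp, hεcrit, _⟩
      · exact hV
      · exact absurd ⟨ε, hεcrit, hεcomp⟩ hex
    have hex' : ¬ ∃ ε, CritE G F' ε ∧ inCompE G F' (F'.f₁ e) u ε := by
      rintro ⟨ε, hc, hcomp⟩
      have hcF : CritE G F ε := (hsh.2.1 ε).2 hc
      exact hex ⟨ε, hcF, (inCompE_inv hG hF hF' hsh he hu hcF).2 hcomp⟩
    have hattV' : ∃ z, inCompV G F' (F'.f₁ e) u z ∧ CritV G F' z ∧ F'.f₀ z = m' := by
      rcases h'.1 with hV | ⟨ε, hεcomp, hεcrit, _⟩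
      · exact hV
      · exact absurd ⟨ε, hεcrit, hεcomp⟩ hex'
    obtain ⟨z₁, hz₁comp, hz₁crit, hz₁m⟩ := hattV
    obtain ⟨z₂, hz₂comp, hz₂crit, hz₂m⟩ := hattV'
    have hcF : CritV G F z₂ := (hsh.1 z₂).2 hz₂crit
    have h1 : F'.f₀ z₁ ≤ F'.f₀ z₂ := by
      rw [hz₂m]
      exact h'.2.1 z₁ ((inCompV_inv hG hF hF' hsh he hu hz₁crit).1 hz₁comp)
        ((hsh.1 z₁).1 hz₁crit)
    have h2 : F.f₀ z₂ ≤ F.f₀ z₁ := by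
      rw [hz₁m]
      exact h.2.1 z₂ ((inCompV_inv hG hF hF' hsh he hu hcF).2 hz₂comp) hcF
    have h3 : F'.f₀ z₂ ≤ F'.f₀ z₁ := (hsh.2.2.1 z₂ z₁ hcF hz₁crit).1 h2
    have hzz : z₁ = z₂ := hF'.2.1 z₁ z₂ (le_antisymm h1 h3)
    exact Or.inr ⟨z₁, hz₁crit, hz₁m, by rw [hzz]; exact hz₂m⟩

lemma chir_cases (c x : Chir) : x = c ∨ x = c.other := by
  cases c <;> cases x <;> simp [Chir.other]

lemma child_core (hG : G.IsTree) (hF : IsDMF G F) (hF' : IsDMF G F')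
    (hsh : ShuffleEquiv G F F') {e : Sym2 V} {u w : V}
    (he : CritE G F e) (huw : s(u, w) = e)
    {mu mw minu minw mu' mw' minu' minw' r1 r2 r1' r2' : ℝ}
    (hMu : IsMaxCrit G F (F.f₁ e) u mu) (hMw : IsMaxCrit G F (F.f₁ e) w mw)
    (hCu : IsCompMin G F (F.f₁ e) u minu) (hCw : IsCompMin G F (F.f₁ e) w minw)
    (hMu' : IsMaxCrit G F' (F'.f₁ e) u mu') (hMw' : IsMaxCrit G F' (F'.f₁ e) w mw')
    (hCu' : IsCompMin G F' (F'.f₁ e) u minu') (hCw' : IsCompMin G F' (F'.f₁ e) w minw')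
    (hd : (minu < minw ∧ r1 = mu ∧ r2 = mw) ∨ (minw < minu ∧ r1 = mw ∧ r2 = mu))
    (hd' : (minu' < minw' ∧ r1' = mu' ∧ r2' = mw') ∨ (minw' < minu' ∧ r1' = mw' ∧ r2' = mu')) :
    MatchVal G F F' r1 r1' ∧ MatchVal G F F' r2 r2' := by
  have hu : u ∈ e := by rw [← huw]; exact Sym2.mem_mk_left _ _
  have hw : w ∈ e := by rw [← huw]; exact Sym2.mem_mk_right _ _
  obtain ⟨zu, hzu_crit, hzu_comp, hzu_m, hzu_m'⟩ := compMin_match hG hF hF' hsh he hu hCu hCu'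
  obtain ⟨zw, hzw_crit, hzw_comp, hzw_m, hzw_m'⟩ := compMin_match hG hF hF' hsh he hw hCw hCw'
  have hzz : zu ≠ zw := by
    rintro rfl
    exact not_reach hG he huw (hzu_comp.2.symm.trans hzw_comp.2)
  have hminuw : minu < minw ↔ minu' < minw' := by
    rw [← hzu_m, ← hzw_m, ← hzu_m', ← hzw_m']
    exact critV_lt_iff hsh hzu_crit hzw_crit
  rcases hd with ⟨hlt, hr1, hr2⟩ | ⟨hlt, hr1, hr2⟩
  · have hlt' : minu' < minw' := hminuw.1 hlt
    rcases hd' with ⟨_, hr1', hr2'⟩ | ⟨hlt2, _, _⟩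
    · rw [hr1, hr1', hr2, hr2']
      exact ⟨maxCrit_match hG hF hF' hsh he hu hMu hMu',
        maxCrit_match hG hF hF' hsh he hw hMw hMw'⟩
    · exact absurd hlt' (lt_asymm hlt2)
  · have hlt' : minw' < minu' := by
      rcases lt_trichotomy minu' minw' with h | h | h
      · exact absurd (hminuw.2 h) (lt_asymm hlt)
      · exfalso
        have : minu = minw := by
          rw [← hzu_m, ← hzw_m]
          have h1 : F'.f₀ zu = F'.f₀ zw := by rw [hzu_m', hzw_m', h]
          exact congrArg F.f₀ (hF'.2.1 _ _ h1) ▸ rfl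
        linarith
      · exact h
    rcases hd' with ⟨hlt2, _, _⟩ | ⟨_, hr1', hr2'⟩
    · exact absurd hlt' (lt_asymm hlt2)
    · rw [hr1, hr1', hr2, hr2']
      exact ⟨maxCrit_match hG hF hF' hsh he hw hMw hMw',
        maxCrit_match hG hF hF' hsh he hu hMu hMu'⟩

lemma child_labels (hG : G.IsTree) (hF : IsDMF G F) (hF' : IsDMF G F')
    (hsh : ShuffleEquiv G F F') {T T' : MergeTree} {μ μ' : List Chir → ℝ}
    (h1 : IsInducedMlTree G F T μ) (h2 : IsInducedMlTree G F' T' μ')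
    {n : List Chir} (hn : T.IsInner n) (hn' : T'.IsInner n)
    {e : Sym2 V} (he : CritE G F e) (hμ : μ n = F.f₁ e) (hμ' : μ' n = F'.f₁ e)
    (x : Chir) : MatchVal G F F' (μ (n ++ [x])) (μ' (n ++ [x])) := by
  obtain ⟨e₂, he₂, hfe₂, u, w, huw, mu, mw, minu, minw, hMu, hMw, hCu, hCw, hd⟩ :=
    h1.2.2.2.2.2.2 n hn
  obtain ⟨e₃, he₃, hfe₃, u', w', huw', mu', mw', minu', minw', hMu', hMw', hCu', hCw', hd'⟩ :=
    h2.2.2.2.2.2.2 n hn'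
  have he₂e : e₂ = e := hF.2.2.1 _ he₂.1 _ he.1 (hfe₂.trans hμ)
  subst he₂e
  have he₃e : e₃ = e₂ := hF'.2.2.1 _ he₃.1 _ ((hsh.2.1 e₂).1 he₂).1 (hfe₃.trans hμ')
  subst he₃e
  have hcore : MatchVal G F F' (μ (n ++ [chir n])) (μ' (n ++ [chir n])) ∧
      MatchVal G F F' (μ (n ++ [(chir n).other])) (μ' (n ++ [(chir n).other])) := by
    rcases Sym2.eq_iff.mp (huw'.trans huw.symm) with ⟨h1', h2'⟩ | ⟨h1', h2'⟩
    · subst h1'; subst h2'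
      exact child_core hG hF hF' hsh he₂ huw hMu hMw hCu hCw hMu' hMw' hCu' hCw' hd hd'
    · subst h1'; subst h2'
      exact child_core hG hF hF' hsh he₂ huw hMu hMw hCu hCw hMw' hMu' hCw' hCu' hd hd'.symm
  rcases chir_cases (chir n) x with rfl | rfl
  · exact hcore.1
  · exact hcore.2

end AuxDev

/-- Shuffle-equivalent dMfs on the same tree induce isomorphic merge trees (in the
path-word encoding, an isomorphism of merge trees is equality of the node sets). -/
theorem stmt13 {V : Type*} [Fintype V] (G : SimpleGraph V) (hG : G.IsTree)
    (F F' : PreDMF V) (hF : IsDMF G F) (hF' : IsDMF G F')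
    (hsh : ShuffleEquiv G F F')
    (T T' : MergeTree) (μ μ' : List Chir → ℝ)
    (h1 : IsInducedMlTree G F T μ) (h2 : IsInducedMlTree G F' T' μ') :
    T.nodes = T'.nodes := by
  classical
  by_cases hE : ∃ e, CritE G F e
  · have key : ∀ n : List Chir, (n ∈ T.nodes ↔ n ∈ T'.nodes) ∧
        (n ∈ T.nodes → MatchVal G F F' (μ n) (μ' n)) := by
      intro n
      induction n using List.reverseRecOn with
      | nil =>
        refine ⟨iff_of_true T.root_mem T'.root_mem, fun _ => ?_⟩
        have hE' : ∃ e, CritE G F' e := hE.imp fun e he => (hsh.2.1 e).1 he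
        obtain ⟨hinn, hbd⟩ := h1.2.2.2.1 hE
        obtain ⟨hinn', hbd'⟩ := h2.2.2.2.1 hE'
        obtain ⟨e₁, he₁, hfe₁, -⟩ := h1.2.2.2.2.2.2 [] hinn
        obtain ⟨e₂, he₂, hfe₂, -⟩ := h2.2.2.2.2.2.2 [] hinn'
        have hcF : CritE G F e₂ := (hsh.2.1 e₂).2 he₂
        have h12 : F.f₁ e₂ ≤ F.f₁ e₁ := by rw [hfe₁]; exact hbd e₂ hcF
        have h21' : F'.f₁ e₁ ≤ F'.f₁ e₂ := by rw [hfe₂]; exact hbd' e₁ ((hsh.2.1 e₁).1 he₁)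
        have h21 : F.f₁ e₁ ≤ F.f₁ e₂ := (hsh.2.2.2 e₁ e₂ he₁ hcF).2 h21'
        have hee : e₁ = e₂ := hF.2.2.1 e₁ he₁.1 e₂ hcF.1 (le_antisymm h21 h12)
        exact Or.inl ⟨e₁, he₁, hfe₁, by rw [hee]; exact hfe₂⟩
      | append_singleton w x ih =>
        by_cases hw : w ∈ T.nodes
        · have hw' : w ∈ T'.nodes := ih.1.1 hw
          rcases ih.2 hw with ⟨e, he, hμe, hμ'e⟩ | ⟨v, hv, hμv, hμ'v⟩
          · have hwi : T.IsInner w := by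
              by_cases hL : w ++ [Chir.L] ∈ T.nodes
              · exact ⟨hw, hL⟩
              · obtain ⟨v, hcv, hfv⟩ := h1.2.2.2.2.2.1 w ⟨hw, hL⟩
                exact absurd (hfv.trans hμe.symm) (he.2 v)
            have hwi' : T'.IsInner w := by
              by_cases hL : w ++ [Chir.L] ∈ T'.nodes
              · exact ⟨hw', hL⟩
              · obtain ⟨v, hcv, hfv⟩ := h2.2.2.2.2.2.1 w ⟨hw', hL⟩
                exact absurd (hfv.trans hμ'e.symm) (((hsh.2.1 e).1 he).2 v)
            have hmem : w ++ [x] ∈ T.nodes := by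
              cases x
              · exact hwi.2
              · exact (T.full w).1 hwi.2
            have hmem' : w ++ [x] ∈ T'.nodes := by
              cases x
              · exact hwi'.2
              · exact (T'.full w).1 hwi'.2
            exact ⟨iff_of_true hmem hmem',
              fun _ => child_labels hG hF hF' hsh h1 h2 hwi hwi' he hμe.symm hμ'e.symm x⟩
          · have hnl : w ++ [Chir.L] ∉ T.nodes := by
              intro hL
              obtain ⟨e, hce, hfe, -⟩ := h1.2.2.2.2.2.2 w ⟨hw, hL⟩
              exact hce.2 v (hμv.trans hfe.symm)
            have hnl' : w ++ [Chir.L] ∉ T'.nodes := by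
              intro hL
              obtain ⟨e, hce, hfe, -⟩ := h2.2.2.2.2.2.2 w ⟨hw', hL⟩
              exact hce.2 v (hμ'v.trans hfe.symm)
            have hnx : w ++ [x] ∉ T.nodes := by
              cases x
              · exact hnl
              · exact fun h => hnl ((T.full w).2 h)
            have hnx' : w ++ [x] ∉ T'.nodes := by
              cases x
              · exact hnl'
              · exact fun h => hnl' ((T'.full w).2 h)
            exact ⟨iff_of_false hnx hnx', fun h => absurd h hnx⟩
        · have hw' : w ∉ T'.nodes := fun h => hw (ih.1.2 h)
          have hnx : w ++ [x] ∉ T.nodes := fun h => hw (T.prefix_closed w x h)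
          have hnx' : w ++ [x] ∉ T'.nodes := fun h => hw' (T'.prefix_closed w x h)
          exact ⟨iff_of_false hnx hnx', fun h => absurd h hnx⟩
    exact Finset.ext fun n => (key n).1
  · have hE' : ¬ ∃ e, CritE G F' e := fun ⟨e, he⟩ => hE ⟨e, (hsh.2.1 e).2 he⟩
    rw [h1.2.2.2.2.1 hE, h2.2.2.2.2.1 hE']
end

section
/- Component-merge equivalent discrete Morse functions on trees induce isomorphic Morse labeled merge trees. -/
/-- Isomorphism of Morse labeled merge trees.  (In the path-word encoding a
chirality- and root-preserving bijection of merge trees is necessarily the identity on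
path words, so it amounts to equality of the node sets together with a relabeling `ψ`
that is order-preserving on the labels and commutes with the labelings.) -/
def MlIso (T T' : MergeTree) (μ μ' : List Chir → ℝ) : Prop :=
  T.nodes = T'.nodes ∧ ∃ ψ : ℝ → ℝ, Function.Bijective ψ ∧
    (∀ a ∈ T.nodes, ∀ b ∈ T.nodes, μ a ≤ μ b → ψ (μ a) ≤ ψ (μ b)) ∧
    (∀ n ∈ T.nodes, ψ (μ n) = μ' n)

/-- Component-merge (cm) equivalence between dMfs on trees: a value-preserving
bijection of simplices (vertices to vertices, edges to edges) that induces a bijection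
between the connected components of every sublevel complex, and such that an edge of
critical value `a` merges two given components of the strict sublevel complex
`X_{a-ε}` if and only if its image merges the corresponding components. -/
def CmEquiv {V V' : Type*} (G : SimpleGraph V) (F : PreDMF V)
    (G' : SimpleGraph V') (F' : PreDMF V')
    (φv : V → V') (φe : Sym2 V → Sym2 V') : Prop :=
  Function.Bijective φv ∧
  (∀ e ∈ G.edgeSet, φe e ∈ G'.edgeSet) ∧
  (∀ e₁ ∈ G.edgeSet, ∀ e₂ ∈ G.edgeSet, φe e₁ = φe e₂ → e₁ = e₂) ∧
  (∀ e' ∈ G'.edgeSet, ∃ e ∈ G.edgeSet, φe e = e') ∧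
  (∀ v : V, F'.f₀ (φv v) = F.f₀ v) ∧
  (∀ e ∈ G.edgeSet, F'.f₁ (φe e) = F.f₁ e) ∧
  (∀ (c : ℝ) (u w : V),
    (lsub G F c).Reachable u w ↔ (lsub G' F' c).Reachable (φv u) (φv w)) ∧
  (∀ e ∈ G.edgeSet, ∀ u ∈ e, ∃ u' ∈ φe e, (ssub G' F' (F.f₁ e)).Reachable (φv u) u') ∧
  (∀ e ∈ G.edgeSet, ∀ u' ∈ φe e, ∃ u ∈ e, (ssub G' F' (F.f₁ e)).Reachable u' (φv u))


section CmAux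

variable {V V' : Type*}

private lemma ssub_le_ssub (G : SimpleGraph V) (F : PreDMF V) {c₁ c₂ : ℝ} (h : c₁ ≤ c₂) :
    ssub G F c₁ ≤ ssub G F c₂ :=
  fun _ _ ha => ⟨ha.1, lt_of_lt_of_le ha.2 h⟩

private lemma ssub_eq_lsub (G : SimpleGraph V) (F : PreDMF V) {c c' : ℝ}
    (h : ∀ e : Sym2 V, F.f₁ e < c ↔ F.f₁ e ≤ c') : ssub G F c = lsub G F c' := by
  ext a b
  exact and_congr_right fun _ => h _

private lemma exists_c' [Fintype V] [Fintype V'] (F : PreDMF V) (F' : PreDMF V') (c : ℝ) :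
    ∃ c' < c, (∀ e : Sym2 V, (F.f₁ e < c ↔ F.f₁ e ≤ c')) ∧
      (∀ e' : Sym2 V', (F'.f₁ e' < c ↔ F'.f₁ e' ≤ c')) := by
  classical
  set S : Finset ℝ :=
    ((Finset.univ.image F.f₁) ∪ (Finset.univ.image F'.f₁)).filter (· < c) with hS
  by_cases hne : S.Nonempty
  · have hmax := S.max'_mem hne
    have hmaxlt : S.max' hne < c := (Finset.mem_filter.mp hmax).2
    refine ⟨S.max' hne, hmaxlt, fun e => ⟨fun h => ?_, fun h => lt_of_le_of_lt h hmaxlt⟩,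
      fun e' => ⟨fun h => ?_, fun h => lt_of_le_of_lt h hmaxlt⟩⟩
    · exact S.le_max' _ (Finset.mem_filter.mpr
        ⟨Finset.mem_union_left _ (Finset.mem_image_of_mem _ (Finset.mem_univ e)), h⟩)
    · exact S.le_max' _ (Finset.mem_filter.mpr
        ⟨Finset.mem_union_right _ (Finset.mem_image_of_mem _ (Finset.mem_univ e')), h⟩)
  · refine ⟨c - 1, by linarith, fun e => ⟨fun h => ?_, fun h => by linarith⟩,
      fun e' => ⟨fun h => ?_, fun h => by linarith⟩⟩
    · exact absurd ⟨F.f₁ e, Finset.mem_filter.mpr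
        ⟨Finset.mem_union_left _ (Finset.mem_image_of_mem _ (Finset.mem_univ e)), h⟩⟩ hne
    · exact absurd ⟨F'.f₁ e', Finset.mem_filter.mpr
        ⟨Finset.mem_union_right _ (Finset.mem_image_of_mem _ (Finset.mem_univ e')), h⟩⟩ hne

private lemma ssub_reach [Fintype V] [Fintype V'] {G : SimpleGraph V} {F : PreDMF V}
    {G' : SimpleGraph V'} {F' : PreDMF V'} {φv : V → V'}
    (hlsub : ∀ (c : ℝ) (u w : V),
      (lsub G F c).Reachable u w ↔ (lsub G' F' c).Reachable (φv u) (φv w))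
    (c : ℝ) (u w : V) :
    (ssub G F c).Reachable u w ↔ (ssub G' F' c).Reachable (φv u) (φv w) := by
  obtain ⟨c', -, h1, h2⟩ := exists_c' F F' c
  rw [ssub_eq_lsub G F h1, ssub_eq_lsub G' F' h2]
  exact hlsub c' u w

variable {G : SimpleGraph V} {F : PreDMF V} {G' : SimpleGraph V'} {F' : PreDMF V'}
  {φv : V → V'} {φe : Sym2 V → Sym2 V'}

private lemma critV_iff (hcm : CmEquiv G F G' F' φv φe) (v : V) :
    CritV G F v ↔ CritV G' F' (φv v) := by
  obtain ⟨hbij, hmapE, hinjE, hsurjE, hf0, hf1, hlsub, hfwd, hrev⟩ := hcm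
  constructor
  · intro h e' he'
    obtain ⟨e, he, rfl⟩ := hsurjE e' he'
    rw [hf1 e he, hf0 v]
    exact h e he
  · intro h e he
    have := h (φe e) (hmapE e he)
    rwa [hf1 e he, hf0 v] at this

private lemma critE_map (hcm : CmEquiv G F G' F' φv φe) {e : Sym2 V} (h : CritE G F e) :
    CritE G' F' (φe e) := by
  obtain ⟨hbij, hmapE, hinjE, hsurjE, hf0, hf1, hlsub, hfwd, hrev⟩ := hcm
  refine ⟨hmapE e h.1, fun v' => ?_⟩
  obtain ⟨v, rfl⟩ := hbij.2 v'
  rw [hf0 v, hf1 e h.1]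
  exact h.2 v

private lemma critE_rev (hcm : CmEquiv G F G' F' φv φe) {e' : Sym2 V'} (h : CritE G' F' e') :
    ∃ e : Sym2 V, φe e = e' ∧ CritE G F e := by
  obtain ⟨hbij, hmapE, hinjE, hsurjE, hf0, hf1, hlsub, hfwd, hrev⟩ := hcm
  obtain ⟨e, he, rfl⟩ := hsurjE e' h.1
  exact ⟨e, rfl, he, fun v hv => h.2 (φv v) (by rw [hf0 v, hf1 e he]; exact hv)⟩

private lemma inCompV_iff_s15 [Fintype V] [Fintype V'] (hcm : CmEquiv G F G' F' φv φe)
    (c : ℝ) (u z : V) : inCompV G F c u z ↔ inCompV G' F' c (φv u) (φv z) := by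
  have hf0 := hcm.2.2.2.2.1
  have hlsub := hcm.2.2.2.2.2.2.1
  unfold inCompV
  rw [hf0 z]
  exact and_congr_right fun _ => ssub_reach hlsub c z u

private lemma inCompE_map [Fintype V] [Fintype V'] (hcm : CmEquiv G F G' F' φv φe)
    {c : ℝ} {u : V} {e : Sym2 V} (h : inCompE G F c u e) :
    inCompE G' F' c (φv u) (φe e) := by
  have hlsub := hcm.2.2.2.2.2.2.1
  obtain ⟨hbij, hmapE, hinjE, hsurjE, hf0, hf1, hlsub', hfwd, hrev⟩ := hcm
  obtain ⟨heG, hlt, hall⟩ := h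
  refine ⟨hmapE e heG, by rw [hf1 e heG]; exact hlt, ?_⟩
  intro z' hz'
  obtain ⟨z, hz, hzr⟩ := hrev e heG z' hz'
  have h1 : (ssub G' F' c).Reachable z' (φv z) :=
    hzr.mono (ssub_le_ssub G' F' hlt.le)
  exact h1.trans ((ssub_reach hlsub c z u).mp (hall z hz))

private lemma inCompE_rev [Fintype V] [Fintype V'] (hcm : CmEquiv G F G' F' φv φe)
    {c : ℝ} {u : V} {e' : Sym2 V'} (h : inCompE G' F' c (φv u) e') :
    ∃ e : Sym2 V, φe e = e' ∧ inCompE G F c u e := by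
  have hlsub := hcm.2.2.2.2.2.2.1
  obtain ⟨hbij, hmapE, hinjE, hsurjE, hf0, hf1, hlsub', hfwd, hrev⟩ := hcm
  obtain ⟨heG', hlt, hall⟩ := h
  obtain ⟨e, heG, rfl⟩ := hsurjE e' heG'
  have hfe : F.f₁ e < c := by rw [← hf1 e heG]; exact hlt
  refine ⟨e, rfl, heG, hfe, ?_⟩
  intro z hz
  obtain ⟨z', hz', hzr⟩ := hfwd e heG z hz
  have hzz : (ssub G' F' c).Reachable (φv z) (φv u) :=
    (hzr.mono (ssub_le_ssub G' F' hfe.le)).trans (hall z' hz')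
  exact (ssub_reach hlsub c z u).mpr hzz

private lemma maxCrit_map [Fintype V] [Fintype V'] (hcm : CmEquiv G F G' F' φv φe)
    {c : ℝ} {u : V} {m : ℝ} (h : IsMaxCrit G F c u m) : IsMaxCrit G' F' c (φv u) m := by
  obtain ⟨hw, hbv, hbe⟩ := h
  refine ⟨?_, ?_, ?_⟩
  · rcases hw with ⟨z, hz, hcz, hm⟩ | ⟨e, he, hce, hm⟩
    · exact Or.inl ⟨φv z, (inCompV_iff_s15 hcm c u z).mp hz, (critV_iff hcm z).mp hcz,
        by rw [hcm.2.2.2.2.1 z]; exact hm⟩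
    · exact Or.inr ⟨φe e, inCompE_map hcm he, critE_map hcm hce,
        by rw [hcm.2.2.2.2.2.1 e he.1]; exact hm⟩
  · intro z' hz' hcz'
    obtain ⟨z, rfl⟩ := hcm.1.2 z'
    rw [hcm.2.2.2.2.1 z]
    exact hbv z ((inCompV_iff_s15 hcm c u z).mpr hz') ((critV_iff hcm z).mpr hcz')
  · intro e' he' hce'
    obtain ⟨e, rfl, hein⟩ := inCompE_rev hcm he'
    obtain ⟨e₂, he₂eq, he₂crit⟩ := critE_rev hcm hce'
    have he2 : e₂ = e := hcm.2.2.1 e₂ he₂crit.1 e hein.1 he₂eq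
    rw [hcm.2.2.2.2.2.1 e hein.1]
    exact hbe e hein (he2 ▸ he₂crit)

private lemma compMin_map [Fintype V] [Fintype V'] (hcm : CmEquiv G F G' F' φv φe)
    {c : ℝ} {u : V} {m : ℝ} (h : IsCompMin G F c u m) : IsCompMin G' F' c (φv u) m := by
  obtain ⟨⟨z, hz, hm⟩, hb⟩ := h
  refine ⟨⟨φv z, (inCompV_iff_s15 hcm c u z).mp hz, by rw [hcm.2.2.2.2.1 z]; exact hm⟩, ?_⟩
  intro z' hz'
  obtain ⟨z₂, rfl⟩ := hcm.1.2 z'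
  rw [hcm.2.2.2.2.1 z₂]
  exact hb z₂ ((inCompV_iff_s15 hcm c u z₂).mpr hz')

private lemma maxCrit_congr {c m : ℝ} {u₁ u₂ : V}
    (hr : (ssub G F c).Reachable u₁ u₂) (h : IsMaxCrit G F c u₁ m) : IsMaxCrit G F c u₂ m := by
  have keyV : ∀ z : V, inCompV G F c u₁ z ↔ inCompV G F c u₂ z := fun z =>
    ⟨fun hz => ⟨hz.1, hz.2.trans hr⟩, fun hz => ⟨hz.1, hz.2.trans hr.symm⟩⟩
  have keyE : ∀ e : Sym2 V, inCompE G F c u₁ e ↔ inCompE G F c u₂ e := fun e =>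
    ⟨fun hz => ⟨hz.1, hz.2.1, fun z hzm => (hz.2.2 z hzm).trans hr⟩,
     fun hz => ⟨hz.1, hz.2.1, fun z hzm => (hz.2.2 z hzm).trans hr.symm⟩⟩
  obtain ⟨hw, hbv, hbe⟩ := h
  refine ⟨?_, fun z hz hcz => hbv z ((keyV z).mpr hz) hcz,
    fun e heq hce => hbe e ((keyE e).mpr heq) hce⟩
  rcases hw with ⟨z, hz, h3, h4⟩ | ⟨e, heq, h3, h4⟩
  · exact Or.inl ⟨z, (keyV z).mp hz, h3, h4⟩
  · exact Or.inr ⟨e, (keyE e).mp heq, h3, h4⟩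

private lemma compMin_congr {c m : ℝ} {u₁ u₂ : V}
    (hr : (ssub G F c).Reachable u₁ u₂) (h : IsCompMin G F c u₁ m) : IsCompMin G F c u₂ m := by
  have keyV : ∀ z : V, inCompV G F c u₁ z ↔ inCompV G F c u₂ z := fun z =>
    ⟨fun hz => ⟨hz.1, hz.2.trans hr⟩, fun hz => ⟨hz.1, hz.2.trans hr.symm⟩⟩
  obtain ⟨⟨z, hz, hm⟩, hb⟩ := h
  exact ⟨⟨z, (keyV z).mp hz, hm⟩, fun z₂ hz₂ => hb z₂ ((keyV z₂).mpr hz₂)⟩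

private lemma maxCrit_unique {c : ℝ} {u : V} {m₁ m₂ : ℝ}
    (h1 : IsMaxCrit G F c u m₁) (h2 : IsMaxCrit G F c u m₂) : m₁ = m₂ := by
  have A : ∀ {a b : ℝ}, IsMaxCrit G F c u a → IsMaxCrit G F c u b → a ≤ b := by
    intro a b ha hb
    rcases ha.1 with ⟨z, hz, h3, h4⟩ | ⟨e, heq, h3, h4⟩
    · rw [← h4]; exact hb.2.1 z hz h3
    · rw [← h4]; exact hb.2.2 e heq h3
  exact le_antisymm (A h1 h2) (A h2 h1)

private lemma compMin_unique {c : ℝ} {u : V} {m₁ m₂ : ℝ}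
    (h1 : IsCompMin G F c u m₁) (h2 : IsCompMin G F c u m₂) : m₁ = m₂ := by
  obtain ⟨⟨z₁, hz₁, hm₁⟩, hb₁⟩ := h1
  obtain ⟨⟨z₂, hz₂, hm₂⟩, hb₂⟩ := h2
  have l1 : m₁ ≤ F.f₀ z₂ := hb₁ z₂ hz₂
  have l2 : m₂ ≤ F.f₀ z₁ := hb₂ z₁ hz₁
  rw [hm₂] at l1
  rw [hm₁] at l2
  exact le_antisymm l1 l2

private lemma not_ssub_reach (hG : G.IsTree) (F : PreDMF V) {u w : V}
    (he : G.Adj u w) : ¬ (ssub G F (F.f₁ s(u, w))).Reachable u w := by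
  intro hr
  have hb : G.IsBridge s(u, w) :=
    (SimpleGraph.isAcyclic_iff_forall_adj_isBridge.mp hG.IsAcyclic) he
  refine (SimpleGraph.isBridge_iff.mp hb) (hr.mono ?_)
  intro a b hab
  rw [SimpleGraph.deleteEdges_adj]
  refine ⟨hab.1, ?_⟩
  rintro hmem
  rw [Set.mem_singleton_iff] at hmem
  have h2 := hab.2
  rw [hmem] at h2
  exact lt_irrefl _ h2

private lemma inner_or_leaf (T : MergeTree) {n : List Chir} (h : n ∈ T.nodes) :
    T.IsInner n ∨ T.IsLeaf n := by
  by_cases hc : n ++ [Chir.L] ∈ T.nodes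
  · exact Or.inl ⟨h, hc⟩
  · exact Or.inr ⟨h, hc⟩

private lemma child_mem (T : MergeTree) (n : List Chir) (x : Chir) :
    n ++ [x] ∈ T.nodes ↔ T.IsInner n := by
  constructor
  · intro h
    refine ⟨T.prefix_closed n x h, ?_⟩
    cases x
    · exact h
    · exact (T.full n).mpr h
  · intro h
    cases x
    · exact h.2
    · exact (T.full n).mp h.2

private lemma chir_cases_s15 (x y : Chir) : x = y ∨ x = y.other := by
  cases x <;> cases y <;> simp [Chir.other]

end CmAux

/-- Component-merge equivalent dMfs on trees induce isomorphic Morse labeled merge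
trees. -/
theorem stmt15 {V V' : Type*} [Fintype V] [Fintype V']
    (G : SimpleGraph V) (G' : SimpleGraph V') (hG : G.IsTree) (hG' : G'.IsTree)
    (F : PreDMF V) (F' : PreDMF V') (hF : IsDMF G F) (hF' : IsDMF G' F')
    (φv : V → V') (φe : Sym2 V → Sym2 V') (hcm : CmEquiv G F G' F' φv φe)
    (T T' : MergeTree) (μ μ' : List Chir → ℝ)
    (h1 : IsInducedMlTree G F T μ) (h2 : IsInducedMlTree G' F' T' μ') :
    MlIso T T' μ μ' := by
  obtain ⟨hinj₁, hE₁, hV₁, hroot₁, hno₁, hleaf₁, hinner₁⟩ := h1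
  obtain ⟨hinj₂, hE₂, hV₂, hroot₂, hno₂, hleaf₂, hinner₂⟩ := h2
  have hbij := hcm.1
  have hf0 := hcm.2.2.2.2.1
  have hf1 := hcm.2.2.2.2.2.1
  have hlsub := hcm.2.2.2.2.2.2.1
  have hfwd := hcm.2.2.2.2.2.2.2.1
  have hrev := hcm.2.2.2.2.2.2.2.2
  -- a node present in both trees with equal labels is inner in T iff it is inner in T'
  have type_match : ∀ m : List Chir, m ∈ T.nodes → m ∈ T'.nodes → μ m = μ' m →
      (T.IsInner m ↔ T'.IsInner m) := by
    intro m hm hm' hμ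
    constructor
    · intro hI
      rcases inner_or_leaf T' hm' with hI' | hL'
      · exact hI'
      · exfalso
        obtain ⟨e, he, hev, -⟩ := hinner₁ m hI
        obtain ⟨v', hv', hμv'⟩ := hleaf₂ m hL'
        exact (critE_map hcm he).2 v' (by rw [hμv', ← hμ, ← hev, hf1 e he.1])
    · intro hI'
      rcases inner_or_leaf T hm with hI | hL
      · exact hI
      · exfalso
        obtain ⟨e', he', hev', -⟩ := hinner₂ m hI'
        obtain ⟨v, hv, hμv⟩ := hleaf₁ m hL
        obtain ⟨e, hee, hecrit⟩ := critE_rev hcm he'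
        exact hecrit.2 v (by rw [hμv, hμ, ← hev', ← hee, hf1 e hecrit.1])
  -- labels of the children of a common inner node agree
  have meat : ∀ n : List Chir, T.IsInner n → T'.IsInner n → μ n = μ' n →
      ∀ x : Chir, μ (n ++ [x]) = μ' (n ++ [x]) := by
    intro n hIn hIn' hμn
    obtain ⟨e, he, hev, u, w, huw, mu, mw, minu, minw, hmu, hmw, hminu, hminw, hdisj⟩ :=
      hinner₁ n hIn
    obtain ⟨e', he', hev', u', w', huw', mu', mw', minu', minw', hmu', hmw', hminu', hminw',
      hdisj'⟩ := hinner₂ n hIn'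
    have heq : e' = φe e := hF'.2.2.1 e' he'.1 (φe e) (critE_map hcm he).1
      (by rw [hev', ← hμn, ← hev, hf1 e he.1])
    subst heq
    rw [hf1 e he.1] at hmu' hmw' hminu' hminw'
    have hu : u ∈ e := by rw [← huw]; exact Sym2.mem_mk_left u w
    have hw : w ∈ e := by rw [← huw]; exact Sym2.mem_mk_right u w
    obtain ⟨a', ha'm, ha'r⟩ := hfwd e he.1 u hu
    obtain ⟨b', hb'm, hb'r⟩ := hfwd e he.1 w hw
    rw [← huw', Sym2.mem_iff] at ha'm hb'm
    have hnr : ¬ (ssub G' F' (F.f₁ e)).Reachable (φv u) (φv w) := by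
      intro hr
      have hr2 : (ssub G F (F.f₁ e)).Reachable u w := (ssub_reach hlsub _ u w).mpr hr
      have hadj : G.Adj u w := by rw [← SimpleGraph.mem_edgeSet, huw]; exact he.1
      exact not_ssub_reach hG F hadj (by rw [huw]; exact hr2)
    have hmatch : (IsMaxCrit G' F' (F.f₁ e) u' mu ∧ IsMaxCrit G' F' (F.f₁ e) w' mw ∧
        IsCompMin G' F' (F.f₁ e) u' minu ∧ IsCompMin G' F' (F.f₁ e) w' minw) ∨
        (IsMaxCrit G' F' (F.f₁ e) u' mw ∧ IsMaxCrit G' F' (F.f₁ e) w' mu ∧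
        IsCompMin G' F' (F.f₁ e) u' minw ∧ IsCompMin G' F' (F.f₁ e) w' minu) := by
      rcases ha'm with rfl | rfl <;> rcases hb'm with rfl | rfl
      · exact absurd (ha'r.trans hb'r.symm) hnr
      · exact Or.inl ⟨maxCrit_congr ha'r (maxCrit_map hcm hmu),
          maxCrit_congr hb'r (maxCrit_map hcm hmw),
          compMin_congr ha'r (compMin_map hcm hminu),
          compMin_congr hb'r (compMin_map hcm hminw)⟩
      · exact Or.inr ⟨maxCrit_congr hb'r (maxCrit_map hcm hmw),
          maxCrit_congr ha'r (maxCrit_map hcm hmu),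
          compMin_congr hb'r (compMin_map hcm hminw),
          compMin_congr ha'r (compMin_map hcm hminu)⟩
      · exact absurd (ha'r.trans hb'r.symm) hnr
    intro x
    rcases hmatch with ⟨Hmu, Hmw, Hminu, Hminw⟩ | ⟨Hmu, Hmw, Hminu, Hminw⟩
    · have e1 : mu' = mu := maxCrit_unique hmu' Hmu
      have e2 : mw' = mw := maxCrit_unique hmw' Hmw
      have e3 : minu' = minu := compMin_unique hminu' Hminu
      have e4 : minw' = minw := compMin_unique hminw' Hminw
      rcases hdisj with ⟨hlt, hA, hB⟩ | ⟨hlt, hA, hB⟩ <;>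
        rcases hdisj' with ⟨hlt', hA', hB'⟩ | ⟨hlt', hA', hB'⟩
      · rcases chir_cases_s15 x (chir n) with rfl | rfl
        · rw [hA, hA', e1]
        · rw [hB, hB', e2]
      · exfalso; rw [e3, e4] at hlt'; linarith
      · exfalso; rw [e3, e4] at hlt'; linarith
      · rcases chir_cases_s15 x (chir n) with rfl | rfl
        · rw [hA, hA', e2]
        · rw [hB, hB', e1]
    · have e1 : mu' = mw := maxCrit_unique hmu' Hmu
      have e2 : mw' = mu := maxCrit_unique hmw' Hmw
      have e3 : minu' = minw := compMin_unique hminu' Hminu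
      have e4 : minw' = minu := compMin_unique hminw' Hminw
      rcases hdisj with ⟨hlt, hA, hB⟩ | ⟨hlt, hA, hB⟩ <;>
        rcases hdisj' with ⟨hlt', hA', hB'⟩ | ⟨hlt', hA', hB'⟩
      · exfalso; rw [e3, e4] at hlt'; linarith
      · rcases chir_cases_s15 x (chir n) with rfl | rfl
        · rw [hA, hA', e2]
        · rw [hB, hB', e1]
      · rcases chir_cases_s15 x (chir n) with rfl | rfl
        · rw [hA, hA', e1]
        · rw [hB, hB', e2]
      · exfalso; rw [e3, e4] at hlt'; linarith
  -- root labels agree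
  have root_eq : μ [] = μ' [] := by
    by_cases hEx : ∃ e : Sym2 V, CritE G F e
    · obtain ⟨e, he⟩ := hEx
      have hEx' : ∃ e' : Sym2 V', CritE G' F' e' := ⟨φe e, critE_map hcm he⟩
      have hr₁ := hroot₁ ⟨e, he⟩
      have hr₂ := hroot₂ hEx'
      obtain ⟨e₀, he₀, hev₀, -⟩ := hinner₁ [] hr₁.1
      obtain ⟨e₀', he₀', hev₀', -⟩ := hinner₂ [] hr₂.1
      apply le_antisymm
      · rw [← hev₀]
        have hle := hr₂.2 (φe e₀) (critE_map hcm he₀)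
        rwa [hf1 e₀ he₀.1] at hle
      · rw [← hev₀']
        obtain ⟨e₁, he₁eq, he₁⟩ := critE_rev hcm he₀'
        have hle := hr₁.2 e₁ he₁
        rw [← he₁eq, hf1 e₁ he₁.1]
        exact hle
    · have hEx' : ¬ ∃ e' : Sym2 V', CritE G' F' e' := by
        rintro ⟨e', he'⟩
        obtain ⟨e, -, he⟩ := critE_rev hcm he'
        exact hEx ⟨e, he⟩
      have hn := hno₁ hEx
      have hn' := hno₂ hEx'
      have hL : T.IsLeaf [] := ⟨T.root_mem, by rw [hn]; simp⟩
      have hL' : T'.IsLeaf [] := ⟨T'.root_mem, by rw [hn']; simp⟩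
      obtain ⟨v', hv', hμ'⟩ := hleaf₂ [] hL'
      obtain ⟨v₂, rfl⟩ := hbij.2 v'
      have hv₂ : CritV G F v₂ := (critV_iff hcm v₂).mpr hv'
      obtain ⟨m, hmL, hm⟩ := hV₁ v₂ hv₂
      have hm0 : m = [] := by
        have hmm := hmL.1
        rw [hn] at hmm
        simpa using hmm
      rw [← hμ', hf0 v₂, ← hm, hm0]
  -- the main invariant, by induction on path words
  have keyP : ∀ n : List Chir, (n ∈ T.nodes ↔ n ∈ T'.nodes) ∧
      (n ∈ T.nodes → μ n = μ' n ∧ (T.IsInner n ↔ T'.IsInner n)) := by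
    intro n
    induction n using List.reverseRecOn with
    | nil =>
      exact ⟨⟨fun _ => T'.root_mem, fun _ => T.root_mem⟩,
        fun _ => ⟨root_eq, type_match [] T.root_mem T'.root_mem root_eq⟩⟩
    | append_singleton n x ih =>
      have hc := child_mem T n x
      have hc' := child_mem T' n x
      by_cases hn : n ∈ T.nodes
      · obtain ⟨hμn, hii⟩ := ih.2 hn
        have hmem : n ++ [x] ∈ T.nodes ↔ n ++ [x] ∈ T'.nodes := by rw [hc, hc']; exact hii
        refine ⟨hmem, fun hm => ?_⟩
        have hIn : T.IsInner n := hc.mp hm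
        have hIn' : T'.IsInner n := hii.mp hIn
        have hμc : μ (n ++ [x]) = μ' (n ++ [x]) := meat n hIn hIn' hμn x
        exact ⟨hμc, type_match _ hm (hmem.mp hm) hμc⟩
      · have hn' : n ∉ T'.nodes := fun h => hn (ih.1.mpr h)
        refine ⟨?_, fun hm => absurd (hc.mp hm).1 hn⟩
        rw [hc, hc']
        exact iff_of_false (fun h => hn h.1) (fun h => hn' h.1)
  exact ⟨Finset.ext fun n => (keyP n).1, id, Function.bijective_id,
    fun a _ b _ h => h, fun n hn => ((keyP n).2 hn).1⟩
end
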